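/- Let $x_2 \in (-1,1)$, $\epsilon \geq 0$, and define for $x_1 \geq 0$ the offset curve $q_1(x_1) = \frac{1}{\sqrt{2}}\sqrt{1 + \frac{x_1^2-(1-x_2^2)}{\sqrt{x_1^2+(x_2+1)^2}\sqrt{x_1^2+(1-x_2)^2+\epsilon^2}}}$. Then $q_1$ is differentiable on $(0,\infty)$ with $q_1'(x_1) = \frac{P_1(x_1)}{4\, q_1(x_1)\, h_1(x_1)^3}$, where $h_1(x_1) = \sqrt{(x_1^2+(1+x_2)^2)(x_1^2+(1-x_2)^2+\epsilon^2)}$ and $P_1(x_1) = 4x_1(1-x_2^2+x_1^2) + \epsilon^2 x_1((x_2+1)(x_2+3)+x_1^2)$. In particular $q_1' > 0$ on $(0,\infty)$, so $q_1$ is strictly increasing there. -/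

import Mathlib

open Real Set

set_option maxHeartbeats 1600000 in
theorem offset_q1_deriv (x2 eps : ℝ) (hx2 : x2 ∈ Set.Ioo (-1 : ℝ) 1) (heps : 0 ≤ eps)
    (q1 h1 P1 : ℝ → ℝ)
    (hq1 : ∀ x1 : ℝ, q1 x1 = (1 / Real.sqrt 2) *
      Real.sqrt (1 + (x1 ^ 2 - (1 - x2 ^ 2)) /
        (Real.sqrt (x1 ^ 2 + (x2 + 1) ^ 2) *
          Real.sqrt (x1 ^ 2 + (1 - x2) ^ 2 + eps ^ 2))))
    (hh1 : ∀ x1 : ℝ, h1 x1 =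
      Real.sqrt ((x1 ^ 2 + (1 + x2) ^ 2) * (x1 ^ 2 + (1 - x2) ^ 2 + eps ^ 2)))
    (hP1 : ∀ x1 : ℝ, P1 x1 = 4 * x1 * (1 - x2 ^ 2 + x1 ^ 2) +
      eps ^ 2 * x1 * ((x2 + 1) * (x2 + 3) + x1 ^ 2)) :
    (∀ x1 ∈ Set.Ioi (0 : ℝ),
      HasDerivAt q1 (P1 x1 / (4 * q1 x1 * h1 x1 ^ 3)) x1 ∧
        0 < P1 x1 / (4 * q1 x1 * h1 x1 ^ 3)) ∧
    StrictMonoOn q1 (Set.Ioi (0 : ℝ)) := by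
  obtain ⟨hx2l, hx2r⟩ := hx2
  have hmain : ∀ x1 ∈ Set.Ioi (0 : ℝ),
      HasDerivAt q1 (P1 x1 / (4 * q1 x1 * h1 x1 ^ 3)) x1 ∧
        0 < P1 x1 / (4 * q1 x1 * h1 x1 ^ 3) := by
    intro x hx
    simp only [Set.mem_Ioi] at hx
    have hA0 : (0:ℝ) < x ^ 2 + (x2 + 1) ^ 2 := by positivity
    have hB0 : (0:ℝ) < x ^ 2 + (1 - x2) ^ 2 + eps ^ 2 := by positivity
    set sA := Real.sqrt (x ^ 2 + (x2 + 1) ^ 2) with hsAdef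
    set sB := Real.sqrt (x ^ 2 + (1 - x2) ^ 2 + eps ^ 2) with hsBdef
    have hsA0 : 0 < sA := Real.sqrt_pos.mpr hA0
    have hsB0 : 0 < sB := Real.sqrt_pos.mpr hB0
    have hsA2 : sA ^ 2 = x ^ 2 + (x2 + 1) ^ 2 := Real.sq_sqrt hA0.le
    have hsB2 : sB ^ 2 = x ^ 2 + (1 - x2) ^ 2 + eps ^ 2 := Real.sq_sqrt hB0.le
    -- positivity of 1 + n/(sA*sB)
    have hsq : (x ^ 2 - (1 - x2 ^ 2)) ^ 2 < (sA * sB) ^ 2 := by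
      have : (sA * sB) ^ 2 = sA ^ 2 * sB ^ 2 := by ring
      rw [this, hsA2, hsB2]
      nlinarith [sq_nonneg eps, sq_nonneg x, mul_pos hx hx, sq_nonneg (x2+1)]
    have hsum : 0 < sA * sB + (x ^ 2 - (1 - x2 ^ 2)) := by
      nlinarith [mul_pos hsA0 hsB0]
    have hfrac : 0 < 1 + (x ^ 2 - (1 - x2 ^ 2)) / (sA * sB) := by
      have h := div_pos hsum (mul_pos hsA0 hsB0)
      rw [add_div] at h
      rw [div_self (mul_pos hsA0 hsB0).ne'] at h
      linarith
    set S := Real.sqrt (1 + (x ^ 2 - (1 - x2 ^ 2)) / (sA * sB)) with hSdef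
    have hS0 : 0 < S := Real.sqrt_pos.mpr hfrac
    have hS2 : S ^ 2 = 1 + (x ^ 2 - (1 - x2 ^ 2)) / (sA * sB) := Real.sq_sqrt hfrac.le
    have hr0 : (0:ℝ) < Real.sqrt 2 := Real.sqrt_pos.mpr two_pos
    have hr2 : Real.sqrt 2 ^ 2 = 2 := Real.sq_sqrt two_pos.le
    -- derivatives
    have dA : HasDerivAt (fun t : ℝ => t ^ 2 + (x2 + 1) ^ 2) (2 * x) x := by
      simpa using (hasDerivAt_pow 2 x).add_const ((x2 + 1) ^ 2)
    have dB : HasDerivAt (fun t : ℝ => t ^ 2 + (1 - x2) ^ 2 + eps ^ 2) (2 * x) x := by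
      simpa using ((hasDerivAt_pow 2 x).add_const ((1 - x2) ^ 2)).add_const (eps ^ 2)
    have dsA : HasDerivAt (fun t : ℝ => Real.sqrt (t ^ 2 + (x2 + 1) ^ 2))
        (2 * x / (2 * sA)) x := dA.sqrt hA0.ne'
    have dsB : HasDerivAt (fun t : ℝ => Real.sqrt (t ^ 2 + (1 - x2) ^ 2 + eps ^ 2))
        (2 * x / (2 * sB)) x := dB.sqrt hB0.ne'
    have dprod : HasDerivAt
        (fun t : ℝ => Real.sqrt (t ^ 2 + (x2 + 1) ^ 2) *
          Real.sqrt (t ^ 2 + (1 - x2) ^ 2 + eps ^ 2))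
        (2 * x / (2 * sA) * sB + sA * (2 * x / (2 * sB))) x := dsA.mul dsB
    have dn : HasDerivAt (fun t : ℝ => t ^ 2 - (1 - x2 ^ 2)) (2 * x) x := by
      simpa using (hasDerivAt_pow 2 x).sub_const (1 - x2 ^ 2)
    have dfrac : HasDerivAt
        (fun t : ℝ => (t ^ 2 - (1 - x2 ^ 2)) /
          (Real.sqrt (t ^ 2 + (x2 + 1) ^ 2) *
            Real.sqrt (t ^ 2 + (1 - x2) ^ 2 + eps ^ 2)))
        ((2 * x * (sA * sB) - (x ^ 2 - (1 - x2 ^ 2)) *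
          (2 * x / (2 * sA) * sB + sA * (2 * x / (2 * sB)))) / (sA * sB) ^ 2) x :=
      dn.div dprod (mul_pos hsA0 hsB0).ne'
    have d1 : HasDerivAt
        (fun t : ℝ => 1 + (t ^ 2 - (1 - x2 ^ 2)) /
          (Real.sqrt (t ^ 2 + (x2 + 1) ^ 2) *
            Real.sqrt (t ^ 2 + (1 - x2) ^ 2 + eps ^ 2)))
        ((2 * x * (sA * sB) - (x ^ 2 - (1 - x2 ^ 2)) *
          (2 * x / (2 * sA) * sB + sA * (2 * x / (2 * sB)))) / (sA * sB) ^ 2) x :=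
      dfrac.const_add 1
    have dS : HasDerivAt
        (fun t : ℝ => Real.sqrt (1 + (t ^ 2 - (1 - x2 ^ 2)) /
          (Real.sqrt (t ^ 2 + (x2 + 1) ^ 2) *
            Real.sqrt (t ^ 2 + (1 - x2) ^ 2 + eps ^ 2))))
        ((2 * x * (sA * sB) - (x ^ 2 - (1 - x2 ^ 2)) *
          (2 * x / (2 * sA) * sB + sA * (2 * x / (2 * sB)))) / (sA * sB) ^ 2 /
          (2 * S)) x := d1.sqrt hfrac.ne'
    have dq : HasDerivAt q1
        ((1 / Real.sqrt 2) * ((2 * x * (sA * sB) - (x ^ 2 - (1 - x2 ^ 2)) *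
          (2 * x / (2 * sA) * sB + sA * (2 * x / (2 * sB)))) / (sA * sB) ^ 2 /
          (2 * S))) x := by
      have h := dS.const_mul (1 / Real.sqrt 2)
      have hfun : q1 = fun t : ℝ => (1 / Real.sqrt 2) *
          Real.sqrt (1 + (t ^ 2 - (1 - x2 ^ 2)) /
            (Real.sqrt (t ^ 2 + (x2 + 1) ^ 2) *
              Real.sqrt (t ^ 2 + (1 - x2) ^ 2 + eps ^ 2))) := funext hq1
      rw [hfun]
      exact h
    -- identify q1 x and h1 x
    have hq1x : q1 x = (1 / Real.sqrt 2) * S := hq1 x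
    have hh1x : h1 x = sA * sB := by
      have e : (x ^ 2 + (1 + x2) ^ 2) * (x ^ 2 + (1 - x2) ^ 2 + eps ^ 2) =
          (x ^ 2 + (x2 + 1) ^ 2) * (x ^ 2 + (1 - x2) ^ 2 + eps ^ 2) := by ring
      rw [hh1, e, Real.sqrt_mul hA0.le]
    -- key polynomial identity
    have hNkey : (2 * x * (sA * sB) - (x ^ 2 - (1 - x2 ^ 2)) *
        (2 * x / (2 * sA) * sB + sA * (2 * x / (2 * sB)))) * (sA * sB) =
        4 * x * (1 - x2 ^ 2 + x ^ 2) + eps ^ 2 * x * ((x2 + 1) * (x2 + 3) + x ^ 2) := by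
      field_simp
      linear_combination (2 * sB ^ 2 - (x ^ 2 - (1 - x2 ^ 2))) * hsA2 +
        (2 * (x ^ 2 + (x2 + 1) ^ 2) - (x ^ 2 - (1 - x2 ^ 2))) * hsB2
    -- the derivative value equality
    have hval : (1 / Real.sqrt 2) * ((2 * x * (sA * sB) - (x ^ 2 - (1 - x2 ^ 2)) *
        (2 * x / (2 * sA) * sB + sA * (2 * x / (2 * sB)))) / (sA * sB) ^ 2 /
        (2 * S)) = P1 x / (4 * q1 x * h1 x ^ 3) := by
      have hgen : ∀ N : ℝ, 1 / Real.sqrt 2 * (N / (sA * sB) ^ 2 / (2 * S)) =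
          N * (sA * sB) / (4 * (1 / Real.sqrt 2 * S) * (sA * sB) ^ 3) := by
        intro N
        have h22 : Real.sqrt 2 * Real.sqrt 2 = 2 := Real.mul_self_sqrt two_pos.le
        field_simp
        ring_nf
        linear_combination (-2 * N) * h22
      rw [hP1, hq1x, hh1x, ← hNkey]
      exact hgen _
    have hP1pos : 0 < P1 x := by
      rw [hP1]
      have hx2sq : x2 ^ 2 < 1 := by nlinarith
      have t1 : 0 < 4 * x * (1 - x2 ^ 2 + x ^ 2) := by
        apply mul_pos (by linarith)
        nlinarith [sq_nonneg x]
      have t2 : 0 ≤ eps ^ 2 * x * ((x2 + 1) * (x2 + 3) + x ^ 2) := by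
        apply mul_nonneg (mul_nonneg (sq_nonneg _) hx.le)
        nlinarith [sq_nonneg x]
      linarith
    have hq1pos : 0 < q1 x := by rw [hq1x]; positivity
    have hh1pos : 0 < h1 x := by rw [hh1x]; positivity
    have hdenpos : 0 < 4 * q1 x * h1 x ^ 3 := by positivity
    refine ⟨?_, div_pos hP1pos hdenpos⟩
    rw [← hval]
    exact dq
  refine ⟨hmain, ?_⟩
  apply strictMonoOn_of_deriv_pos (convex_Ioi 0)
  · intro x hx
    exact ((hmain x hx).1.continuousAt).continuousWithinAt
  · intro x hx
    rw [interior_Ioi] at hx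
    rw [(hmain x hx).1.deriv]
    exact (hmain x hx).2
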